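/- There exists an absolute constant C > 0 such that for every finite collection Δ_{m_1}, ..., Δ_{m_N} of N ≥ 2 dyadic intervals in ℝ and every choice of positive numbers c_1, ..., c_N one has ‖∑_{j=1}^N c_j 𝟙_{Δ_{m_j}}‖_{L²} ≤ C √(log N) · (∑_{j=1}^N c_j² |Δ_{m_j}|)^{1/2}. -/

import Mathlib

open MeasureTheory Set
open scoped ENNReal

/-- The dyadic interval `Δ_j^m = [(j-1)/2^m, j/2^m)`. -/
noncomputable def dyadicI (m j : ℤ) : Set ℝ :=
  Set.Ico ((j - 1 : ℝ) / 2 ^ m) ((j : ℝ) / 2 ^ m)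

lemma div_le_div_pow_iff {p q m : ℤ} : (p:ℝ)/2^m ≤ (q:ℝ)/2^m ↔ p ≤ q := by
  rw [div_le_div_iff_of_pos_right (by positivity : (0:ℝ) < 2^m), Int.cast_le]

lemma div_lt_div_pow_iff {p q m : ℤ} : (p:ℝ)/2^m < (q:ℝ)/2^m ↔ p < q := by
  rw [div_lt_div_iff_of_pos_right (by positivity : (0:ℝ) < 2^m), Int.cast_lt]

lemma shift_div (p : ℤ) (m : ℤ) (e : ℕ) :
    (p:ℝ)/2^m = ((p * 2^e : ℤ):ℝ)/2^(m + e) := by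
  push_cast
  rw [zpow_add₀ (two_ne_zero) m e, zpow_natCast]
  field_simp

lemma mem_dyadicI {m j : ℤ} {x : ℝ} :
    x ∈ dyadicI m j ↔ ((j:ℝ)-1)/2^m ≤ x ∧ x < (j:ℝ)/2^m := Iff.rfl

lemma volume_dyadicI (m j : ℤ) :
    volume (dyadicI m j) = ENNReal.ofReal ((2:ℝ)^(-m)) := by
  rw [dyadicI, Real.volume_Ico]
  congr 1
  rw [div_sub_div_same, zpow_neg]
  ring_nf

lemma dyadicI_same_gen {m j j' : ℤ} {x : ℝ} (h : x ∈ dyadicI m j) (h' : x ∈ dyadicI m j') :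
    j = j' := by
  obtain ⟨h1, h2⟩ := h
  obtain ⟨h1', h2'⟩ := h'
  have hp : (0:ℝ) < 2^m := by positivity
  have e1 : (j:ℝ) - 1 ≤ x * 2^m := by rw [div_le_iff₀ hp] at h1; linarith
  have e2 : x * 2^m < j := by rw [lt_div_iff₀ hp] at h2; linarith
  have e1' : (j':ℝ) - 1 ≤ x * 2^m := by rw [div_le_iff₀ hp] at h1'; linarith
  have e2' : x * 2^m < j' := by rw [lt_div_iff₀ hp] at h2'; linarith
  have : (j:ℝ) < j' + 1 := by linarith
  have : (j':ℝ) < j + 1 := by linarith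
  have g1 : j < j' + 1 := by exact_mod_cast ‹(j:ℝ) < j' + 1›
  have g2 : j' < j + 1 := by exact_mod_cast ‹(j':ℝ) < j + 1›
  omega

lemma dyadicI_nested {m m' j j' : ℤ} (hmm : m ≤ m') {x : ℝ}
    (h : x ∈ dyadicI m j) (h' : x ∈ dyadicI m' j') :
    dyadicI m' j' ⊆ dyadicI m j := by
  obtain ⟨e, rfl⟩ : ∃ e:ℕ, m' = m + e := ⟨(m' - m).toNat, by omega⟩
  obtain ⟨h1, h2⟩ := h
  obtain ⟨h1', h2'⟩ := h'
  -- rewrite endpoints of big interval at scale m+e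
  have ha : ((j:ℝ) - 1)/2^m = (((j-1) * 2^e : ℤ):ℝ)/2^(m + e) := by
    rw [← shift_div]; push_cast; ring
  have hb : (j:ℝ)/2^m = ((j * 2^e : ℤ):ℝ)/2^(m + e) := by
    rw [← shift_div]
  rw [ha] at h1
  rw [hb] at h2
  -- integer inequalities
  have k1 : ((j-1) * 2^e : ℤ) < j' := by
    have : (((j-1) * 2^e : ℤ):ℝ)/2^(m+e) < (j':ℝ)/2^(m+e) := lt_of_le_of_lt h1 h2'
    exact_mod_cast div_lt_div_pow_iff.mp this
  have k2 : (j' : ℤ) ≤ j * 2^e := by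
    have : ((j' - 1 : ℤ):ℝ)/2^(m+e) < ((j * 2^e : ℤ):ℝ)/2^(m+e) :=
      lt_of_le_of_lt (by push_cast; exact h1') h2
    have := div_lt_div_pow_iff.mp this
    omega
  intro y hy
  obtain ⟨hy1, hy2⟩ := hy
  rw [mem_dyadicI, ha, hb]
  constructor
  · calc (((j-1) * 2^e : ℤ):ℝ)/2^(m+e) ≤ ((j' - 1 : ℤ):ℝ)/2^(m+e) := by
          rw [div_le_div_pow_iff]; omega
      _ ≤ y := by push_cast at hy1 ⊢; exact hy1
  · calc y < (j':ℝ)/2^(m+e) := hy2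
      _ ≤ ((j * 2^e : ℤ):ℝ)/2^(m+e) := by
          rw [show ((j':ℝ)) = ((j':ℤ):ℝ) by norm_cast, div_le_div_pow_iff]; exact k2



lemma measurableSet_dyadicI (m j : ℤ) : MeasurableSet (dyadicI m j) := measurableSet_Ico

lemma volume_dyadicI_lt_top (m j : ℤ) : volume (dyadicI m j) < ⊤ := by
  rw [dyadicI, Real.volume_Ico]; exact ENNReal.ofReal_lt_top

lemma eLpNorm_sum_ind (N : ℕ) (ι : Fin N → ℤ × ℤ) (c : Fin N → ℝ) :
    (eLpNorm (fun x => ∑ j, c j * (dyadicI (ι j).1 (ι j).2).indicator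
        (fun _ => (1 : ℝ)) x) 2 volume).toReal =
    Real.sqrt (∑ j, ∑ k, c j * c k *
      (volume (dyadicI (ι j).1 (ι j).2 ∩ dyadicI (ι k).1 (ι k).2)).toReal) := by
  set Δ : Fin N → Set ℝ := fun j => dyadicI (ι j).1 (ι j).2 with hΔ
  have hmeas : ∀ j, MeasurableSet (Δ j) := fun j => measurableSet_dyadicI _ _
  have hfin : ∀ j, volume (Δ j) ≠ ⊤ := fun j => (volume_dyadicI_lt_top _ _).ne
  have hmem : MemLp (fun x => ∑ j, c j * (Δ j).indicator (fun _ => (1:ℝ)) x) 2 volume := by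
    apply memLp_finset_sum
    intro j _
    exact (memLp_indicator_const 2 (hmeas j) (1:ℝ) (Or.inr (hfin j))).const_mul (c j)
  rw [hmem.eLpNorm_eq_integral_rpow_norm (by norm_num) (by norm_num)]
  rw [ENNReal.toReal_ofReal (by positivity)]
  have h2 : (2 : ℝ≥0∞).toReal = (2:ℝ) := by norm_num
  rw [h2]
  have hint : ∀ p : Fin N × Fin N, Integrable
      (fun x => (c p.1 * c p.2) * (Δ p.1 ∩ Δ p.2).indicator (fun _ => (1:ℝ)) x) volume := by
    intro p
    apply Integrable.const_mul
    rw [integrable_indicator_iff ((hmeas p.1).inter (hmeas p.2))]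
    exact integrableOn_const (lt_of_le_of_lt (measure_mono inter_subset_left)
      (volume_dyadicI_lt_top _ _)).ne
  have hexp : (fun x => ‖∑ j, c j * (Δ j).indicator (fun _ => (1:ℝ)) x‖ ^ (2:ℝ)) =
      fun x => ∑ p : Fin N × Fin N,
        (c p.1 * c p.2) * (Δ p.1 ∩ Δ p.2).indicator (fun _ => (1:ℝ)) x := by
    funext x
    rw [Real.rpow_two]
    rw [show ‖∑ j, c j * (Δ j).indicator (fun _ => (1:ℝ)) x‖ ^ 2
        = (∑ j, c j * (Δ j).indicator (fun _ => (1:ℝ)) x) ^ 2 from sq_abs _]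
    rw [sq, Finset.sum_mul_sum, ← Fintype.sum_prod_type']
    apply Finset.sum_congr rfl
    intro p _
    have := Set.inter_indicator_mul (s := Δ p.1) (t := Δ p.2)
      (f := fun _ => (1:ℝ)) (g := fun _ => (1:ℝ)) x
    simp only [one_mul] at this
    rw [show c p.1 * (Δ p.1).indicator (fun _ => (1:ℝ)) x *
        (c p.2 * (Δ p.2).indicator (fun _ => (1:ℝ)) x)
        = c p.1 * c p.2 * ((Δ p.1).indicator (fun _ => (1:ℝ)) x *
          (Δ p.2).indicator (fun _ => (1:ℝ)) x) from by ring, ← this]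
  rw [hexp, integral_finset_sum _ (fun p _ => hint p)]
  have : ∀ p : Fin N × Fin N, ∫ x, (c p.1 * c p.2) *
      (Δ p.1 ∩ Δ p.2).indicator (fun _ => (1:ℝ)) x ∂volume
      = c p.1 * c p.2 * (volume (Δ p.1 ∩ Δ p.2)).toReal := by
    intro p
    rw [integral_const_mul, integral_indicator_const (1:ℝ) ((hmeas p.1).inter (hmeas p.2))]
    simp [Measure.real]
  simp_rw [this]
  rw [← Fintype.sum_prod_type']
  rw [show ((2:ℝ)⁻¹) = 1/2 from by norm_num, ← Real.sqrt_eq_rpow]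




lemma dyadicI_nonempty (m j : ℤ) : (dyadicI m j).Nonempty := by
  refine ⟨((j:ℝ) - 1)/2^m, le_refl _, ?_⟩
  rw [div_lt_div_iff_of_pos_right (by positivity : (0:ℝ) < 2^m)]
  linarith

lemma geom_tail {r : ℝ} (h0 : 0 ≤ r) (h1 : r < 1) (K : ℕ) (s : Finset ℕ)
    (hs : ∀ d ∈ s, K ≤ d) : ∑ d ∈ s, r ^ d ≤ r ^ K / (1 - r) := by
  have hr1 : (0:ℝ) < 1 - r := by linarith
  set M := max ((s.sup id) + 1) K with hM
  have hsub : s ⊆ Finset.Ico K M := by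
    intro d hd
    simp only [Finset.mem_Ico]
    exact ⟨hs d hd, lt_of_lt_of_le (Nat.lt_succ_of_le (Finset.le_sup (f := id) hd))
      (le_max_left _ _)⟩
  calc ∑ d ∈ s, r ^ d ≤ ∑ d ∈ Finset.Ico K M, r ^ d :=
        Finset.sum_le_sum_of_subset_of_nonneg hsub (fun i _ _ => by positivity)
    _ = (r ^ M - r ^ K) / (r - 1) := geom_sum_Ico (by intro h; rw [h] at h1; linarith)
          (le_max_right _ _)
    _ = (r ^ K - r ^ M) / (1 - r) := by
        rw [div_eq_div_iff (by linarith) (by linarith)]; ring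
    _ ≤ r ^ K / (1 - r) := by
        exact (div_le_div_iff_of_pos_right hr1).mpr (by linarith [pow_nonneg h0 M])

set_option maxHeartbeats 2000000 in
lemma key_bound (N : ℕ) (hN : 2 ≤ N) (ι : Fin N → ℤ × ℤ) (hι : Function.Injective ι)
    (c : Fin N → ℝ) (hc : ∀ j, 0 < c j) :
    ∑ j, ∑ k, c j * c k *
        (volume (dyadicI (ι j).1 (ι j).2 ∩ dyadicI (ι k).1 (ι k).2)).toReal ≤
      (5 + 2 * (Nat.clog 2 N : ℝ)) *
        ∑ j, c j ^ 2 * (volume (dyadicI (ι j).1 (ι j).2)).toReal := by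
  classical
  set m : Fin N → ℤ := fun j => (ι j).1 with hm
  set Δ : Fin N → Set ℝ := fun j => dyadicI (ι j).1 (ι j).2 with hΔ
  set v : Fin N → ℝ := fun j => (volume (Δ j)).toReal with hv
  set D : ℕ := Nat.clog 2 N with hD
  set B : ℝ := ∑ j, c j ^ 2 * v j with hB
  have hvol : ∀ j, volume (Δ j) = ENNReal.ofReal ((2:ℝ) ^ (-(m j))) := fun j =>
    volume_dyadicI _ _
  have hve : ∀ j, v j = (2:ℝ) ^ (-(m j)) := fun j => by
    rw [show v j = (volume (Δ j)).toReal from rfl, hvol j,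
      ENNReal.toReal_ofReal (by positivity)]
  have hvpos : ∀ j, 0 < v j := fun j => by rw [hve]; positivity
  have hBnn : 0 ≤ B := Finset.sum_nonneg fun j _ => by positivity
  -- same generation distinct indices: disjoint
  have hsame : ∀ j k : Fin N, j ≠ k → m j = m k → Δ j ∩ Δ k = ∅ := by
    intro j k hjk hmm
    by_contra h
    obtain ⟨x, hx1, hx2⟩ := Set.nonempty_iff_ne_empty.mpr h
    have hx1' : x ∈ dyadicI (ι j).1 (ι j).2 := hx1
    have hx2' : x ∈ dyadicI (ι j).1 (ι k).2 := by
      rw [show (ι j).1 = (ι k).1 from hmm]; exact hx2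
    have h2 := dyadicI_same_gen hx1' hx2'
    exact hjk (hι (Prod.ext hmm h2))
  -- intersection for m j < m k
  have hw : ∀ j k : Fin N, m j < m k →
      (volume (Δ j ∩ Δ k)).toReal = if Δ k ⊆ Δ j then v k else 0 := by
    intro j k hlt
    split_ifs with hsub
    · rw [Set.inter_eq_self_of_subset_right hsub]
    · have : Δ j ∩ Δ k = ∅ := by
        by_contra h
        obtain ⟨x, hx1, hx2⟩ := Set.nonempty_iff_ne_empty.mpr h
        exact hsub (dyadicI_nested (le_of_lt hlt) hx1 hx2)
      rw [this]; simp
  -- the ancestor-injectivity: for fixed k, map j ↦ m j is injective on ancestors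
  have hanc : ∀ (k : Fin N) (j₁ j₂ : Fin N), Δ k ⊆ Δ j₁ → Δ k ⊆ Δ j₂ →
      m j₁ = m j₂ → j₁ = j₂ := by
    intro k j₁ j₂ h1 h2 hmm
    obtain ⟨x, hx⟩ := dyadicI_nonempty (ι k).1 (ι k).2
    have hx1 : x ∈ dyadicI (ι j₁).1 (ι j₁).2 := h1 hx
    have hx2 : x ∈ dyadicI (ι j₁).1 (ι j₂).2 := by
      rw [show (ι j₁).1 = (ι j₂).1 from hmm]; exact h2 hx
    exact hι (Prod.ext hmm (dyadicI_same_gen hx1 hx2))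
  set P : Fin N → Fin N → Prop := fun j k => m j < m k ∧ Δ k ⊆ Δ j with hP
  set g : Fin N → Fin N → ℕ := fun j k => (m k - m j).toNat with hg
  set T : ℝ := ∑ j, ∑ k, if P j k then c j * c k * v k else 0 with hT
  have tri : ∀ j k : Fin N, c j * c k * (volume (Δ j ∩ Δ k)).toReal
      = (if P j k then c j * c k * v k else 0) + (if P k j then c j * c k * v j else 0)
        + (if j = k then c k ^ 2 * v k else 0) := by
    intro j k
    rcases lt_trichotomy (m j) (m k) with h|h|h
    · have hPkj : ¬ P k j := fun hp => absurd hp.1 (by omega)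
      have hjk : j ≠ k := by intro e; subst e; exact lt_irrefl _ h
      rw [if_neg hPkj, if_neg hjk, add_zero, add_zero, hw j k h]
      by_cases hsub : Δ k ⊆ Δ j
      · rw [if_pos hsub, if_pos (⟨h, hsub⟩ : P j k)]
      · rw [if_neg hsub, if_neg (fun hp : P j k => hsub hp.2), mul_zero]
    · by_cases hjk : j = k
      · subst hjk
        have hnp : ¬ P j j := fun hp => lt_irrefl _ hp.1
        rw [if_neg hnp, if_pos rfl, Set.inter_self]
        have hvd : (volume (Δ j)).toReal = v j := rfl
        rw [hvd]; ring
      · have h0 : Δ j ∩ Δ k = ∅ := hsame j k hjk h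
        have h1 : ¬ P j k := fun hp => absurd hp.1 (by omega)
        have h2 : ¬ P k j := fun hp => absurd hp.1 (by omega)
        rw [if_neg h1, if_neg h2, if_neg hjk, h0]
        simp
    · have hPjk : ¬ P j k := fun hp => absurd hp.1 (by omega)
      have hjk : j ≠ k := by intro e; subst e; exact lt_irrefl _ h
      rw [if_neg hPjk, if_neg hjk, zero_add, add_zero, Set.inter_comm, hw k j h]
      by_cases hsub : Δ j ⊆ Δ k
      · rw [if_pos hsub, if_pos (⟨h, hsub⟩ : P k j)]
      · rw [if_neg hsub, if_neg (fun hp : P k j => hsub hp.2), mul_zero]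
  have decomp : ∑ j, ∑ k, c j * c k * (volume (Δ j ∩ Δ k)).toReal = B + 2 * T := by
    rw [Finset.sum_congr rfl fun j _ => Finset.sum_congr rfl fun k _ => tri j k]
    simp only [Finset.sum_add_distrib]
    have e3 : ∑ j : Fin N, ∑ k : Fin N, (if j = k then c k ^ 2 * v k else 0) = B := by
      rw [hB]
      apply Finset.sum_congr rfl
      intro j _
      rw [Finset.sum_ite_eq Finset.univ j (fun k => c k ^ 2 * v k)]
      simp
    have e2 : (∑ j : Fin N, ∑ k : Fin N, if P k j then c j * c k * v j else 0) = T := by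
      rw [Finset.sum_comm, hT]
      apply Finset.sum_congr rfl
      intro j _
      apply Finset.sum_congr rfl
      intro k _
      split_ifs with h
      · ring
      · rfl
    rw [e2, e3]
    ring
  have main : T ≤ ((2:ℝ) + D) * B := by
    set P1 : Fin N → Fin N → Prop := fun j k => P j k ∧ g j k ≤ D with hP1
    set P2 : Fin N → Fin N → Prop := fun j k => P j k ∧ D < g j k with hP2
    have Tsplit : T = (∑ j, ∑ k, if P1 j k then c j * c k * v k else 0)
        + (∑ j, ∑ k, if P2 j k then c j * c k * v k else 0) := by
      rw [hT, ← Finset.sum_add_distrib]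
      apply Finset.sum_congr rfl
      intro j _
      rw [← Finset.sum_add_distrib]
      apply Finset.sum_congr rfl
      intro k _
      by_cases hp : P j k
      · by_cases hd : g j k ≤ D
        · rw [if_pos hp, if_pos (⟨hp, hd⟩ : P1 j k), if_neg (fun h : P2 j k => by omega),
            add_zero]
        · rw [if_pos hp, if_neg (fun h : P1 j k => hd h.2),
            if_pos (⟨hp, by omega⟩ : P2 j k), zero_add]
      · rw [if_neg hp, if_neg (fun h : P1 j k => hp h.1), if_neg (fun h : P2 j k => hp h.1),
          add_zero]
    -- disjointness of same-distance descendants within Δ j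
    have fiber_bound : ∀ j : Fin N, ∀ d : ℕ,
        ∑ k ∈ (Finset.univ.filter (fun k => P1 j k)).filter (fun k => g j k = d), v k
          ≤ v j := by
      intro j d
      set s' := (Finset.univ.filter (fun k => P1 j k)).filter (fun k => g j k = d) with hs'
      have hsub : ∀ k ∈ s', Δ k ⊆ Δ j := by
        intro k hk
        simp only [hs', Finset.mem_filter] at hk
        exact hk.1.2.1.2
      have hgen : ∀ k ∈ s', m k = m j + d := by
        intro k hk
        simp only [hs', Finset.mem_filter] at hk
        have h1 : m j < m k := hk.1.2.1.1
        have h2 : (m k - m j).toNat = d := hk.2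
        omega
      have hdis : (↑s' : Set (Fin N)).PairwiseDisjoint Δ := by
        intro k1 h1 k2 h2 hne
        simp only [Function.onFun]
        rw [Set.disjoint_iff_inter_eq_empty]
        exact hsame k1 k2 hne (by rw [hgen k1 h1, hgen k2 h2])
      have hfin : ∀ k ∈ s', volume (Δ k) ≠ ⊤ := by
        intro k _
        rw [hvol k]
        exact ENNReal.ofReal_ne_top
      calc ∑ k ∈ s', v k = (∑ k ∈ s', volume (Δ k)).toReal := by
            rw [ENNReal.toReal_sum hfin]
        _ = (volume (⋃ k ∈ s', Δ k)).toReal := by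
            rw [measure_biUnion_finset hdis (fun k _ => measurableSet_dyadicI _ _)]
        _ ≤ (volume (Δ j)).toReal := by
            apply ENNReal.toReal_mono
            · rw [hvol j]; exact ENNReal.ofReal_ne_top
            · exact measure_mono (Set.iUnion₂_subset hsub)
    have inner1 : ∀ j : Fin N, (∑ k, if P1 j k then v k else 0) ≤ (D:ℝ) * v j := by
      intro j
      rw [← Finset.sum_filter]
      have hmap : ∀ k ∈ Finset.univ.filter (fun k => P1 j k), g j k ∈ Finset.Icc 1 D := by
        intro k hk
        simp only [Finset.mem_filter] at hk
        have h1 : m j < m k := hk.2.1.1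
        have h2 : g j k ≤ D := hk.2.2
        simp only [Finset.mem_Icc]
        have h3 : g j k = (m k - m j).toNat := rfl
        exact ⟨by omega, h2⟩
      rw [← Finset.sum_fiberwise_of_maps_to hmap (fun k => v k)]
      calc ∑ d ∈ Finset.Icc 1 D, ∑ k ∈ (Finset.univ.filter (fun k => P1 j k)).filter
              (fun k => g j k = d), v k
          ≤ ∑ _d ∈ Finset.Icc 1 D, v j :=
            Finset.sum_le_sum (fun d _ => fiber_bound j d)
        _ = (D:ℝ) * v j := by
            rw [Finset.sum_const, Nat.card_Icc]
            simp [nsmul_eq_mul]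
    have hcard : ∀ k : Fin N, (Finset.univ.filter (fun j => P1 j k)).card ≤ D := by
      intro k
      have := Finset.card_le_card_of_injOn (s := Finset.univ.filter (fun j => P1 j k))
        (t := Finset.Icc 1 D) (fun j => g j k) ?maps ?inj
      · rwa [Nat.card_Icc, Nat.add_sub_cancel] at this
      case maps =>
        intro j hj
        simp only [Finset.mem_coe, Finset.mem_filter] at hj
        have h1 : m j < m k := hj.2.1.1
        have h2 : g j k ≤ D := hj.2.2
        simp only [Finset.mem_coe, Finset.mem_Icc]
        have h3 : g j k = (m k - m j).toNat := rfl
        exact ⟨by omega, h2⟩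
      case inj =>
        intro j1 hj1 j2 hj2 he
        simp only [Finset.coe_filter, Set.mem_setOf_eq, Finset.mem_univ, true_and] at hj1 hj2
        have hm12 : m j1 = m j2 := by
          have e1 : (m k - m j1).toNat = (m k - m j2).toNat := he
          have l1 : m j1 < m k := hj1.1.1
          have l2 : m j2 < m k := hj2.1.1
          omega
        exact hanc k j1 j2 hj1.1.2 hj2.1.2 hm12
    have hT1 : (∑ j, ∑ k, if P1 j k then c j * c k * v k else 0) ≤ (D:ℝ) * B := by
      have step : (∑ j, ∑ k, if P1 j k then c j * c k * v k else 0)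
          ≤ (∑ j, ∑ k, if P1 j k then c j ^ 2 * v k / 2 else 0)
            + (∑ j, ∑ k, if P1 j k then c k ^ 2 * v k / 2 else 0) := by
        rw [← Finset.sum_add_distrib]
        apply Finset.sum_le_sum
        intro j _
        rw [← Finset.sum_add_distrib]
        apply Finset.sum_le_sum
        intro k _
        by_cases hp : P1 j k
        · rw [if_pos hp, if_pos hp, if_pos hp]
          nlinarith [mul_nonneg (sq_nonneg (c j - c k)) (hvpos k).le]
        · rw [if_neg hp, if_neg hp, if_neg hp]; simp
      have Sa : (∑ j, ∑ k, if P1 j k then c j ^ 2 * v k / 2 else 0) ≤ (D:ℝ) * B / 2 := by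
        have per : ∀ j : Fin N, (∑ k, if P1 j k then c j ^ 2 * v k / 2 else 0)
            ≤ c j ^ 2 * ((D:ℝ) * v j) / 2 := by
          intro j
          have e : (∑ k, if P1 j k then c j ^ 2 * v k / 2 else 0)
              = c j ^ 2 / 2 * (∑ k, if P1 j k then v k else 0) := by
            rw [Finset.mul_sum]
            apply Finset.sum_congr rfl
            intro k _
            split_ifs with h
            · ring
            · ring
          rw [e]
          calc c j ^ 2 / 2 * (∑ k, if P1 j k then v k else 0)
              ≤ c j ^ 2 / 2 * ((D:ℝ) * v j) :=
                mul_le_mul_of_nonneg_left (inner1 j) (by positivity)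
            _ = c j ^ 2 * ((D:ℝ) * v j) / 2 := by ring
        calc (∑ j, ∑ k, if P1 j k then c j ^ 2 * v k / 2 else 0)
            ≤ ∑ j, c j ^ 2 * ((D:ℝ) * v j) / 2 := Finset.sum_le_sum (fun j _ => per j)
          _ = (D:ℝ) * B / 2 := by
              rw [hB, Finset.mul_sum, Finset.sum_div]
              apply Finset.sum_congr rfl
              intro j _
              ring
      have Sb : (∑ j, ∑ k, if P1 j k then c k ^ 2 * v k / 2 else 0) ≤ (D:ℝ) * B / 2 := by
        rw [Finset.sum_comm]
        have per : ∀ k : Fin N, (∑ j, if P1 j k then c k ^ 2 * v k / 2 else 0)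
            ≤ (D:ℝ) * (c k ^ 2 * v k) / 2 := by
          intro k
          rw [← Finset.sum_filter, Finset.sum_const, nsmul_eq_mul]
          calc ((Finset.univ.filter (fun j => P1 j k)).card : ℝ) * (c k ^ 2 * v k / 2)
              ≤ (D:ℝ) * (c k ^ 2 * v k / 2) := by
                apply mul_le_mul_of_nonneg_right _ (by positivity)
                exact_mod_cast hcard k
            _ = (D:ℝ) * (c k ^ 2 * v k) / 2 := by ring
        calc (∑ k, ∑ j, if P1 j k then c k ^ 2 * v k / 2 else 0)
            ≤ ∑ k, (D:ℝ) * (c k ^ 2 * v k) / 2 := Finset.sum_le_sum (fun k _ => per k)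
          _ = (D:ℝ) * B / 2 := by
              rw [hB, Finset.mul_sum, Finset.sum_div]
      linarith
    have hT2 : (∑ j, ∑ k, if P2 j k then c j * c k * v k else 0) ≤ 2 * B := by
      set r : ℝ := (Real.sqrt 2)⁻¹ with hr
      set sN : ℝ := Real.sqrt N with hsN
      have hs2 : (1:ℝ) < Real.sqrt 2 := by
        rw [show (1:ℝ) = Real.sqrt 1 from Real.sqrt_one.symm]
        exact Real.sqrt_lt_sqrt (by norm_num) (by norm_num)
      have hr0 : 0 < r := by rw [hr]; positivity
      have hr1 : r < 1 := by rw [hr]; exact inv_lt_one_of_one_lt₀ hs2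
      have hNpos : (0:ℝ) < N := by
        have : (2:ℝ) ≤ N := by exact_mod_cast hN
        linarith
      have hsN0 : 0 < sN := Real.sqrt_pos.mpr hNpos
      have hsNsq : sN * sN = (N:ℝ) := Real.mul_self_sqrt hNpos.le
      have hpow : ∀ d : ℕ, Real.sqrt ((2:ℝ) ^ d) = (Real.sqrt 2) ^ d := by
        intro d
        rw [show ((2:ℝ) ^ d) = ((Real.sqrt 2) ^ d) ^ 2 by
          rw [← pow_mul, mul_comm d 2, pow_mul, Real.sq_sqrt (by norm_num : (0:ℝ) ≤ 2)]]
        exact Real.sqrt_sq (by positivity)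
      have hrD : sN * r ^ D ≤ 1 := by
        have h1 : sN ≤ (Real.sqrt 2) ^ D := by
          rw [hsN, ← hpow]
          apply Real.sqrt_le_sqrt
          have h2 := Nat.le_pow_clog (by norm_num : 1 < 2) N
          exact_mod_cast h2
        have h2 : r ^ D = ((Real.sqrt 2) ^ D)⁻¹ := by rw [hr, inv_pow]
        have h3 : (0:ℝ) < (Real.sqrt 2) ^ D := by positivity
        rw [h2]
        calc sN * ((Real.sqrt 2) ^ D)⁻¹ ≤ (Real.sqrt 2) ^ D * ((Real.sqrt 2) ^ D)⁻¹ :=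
              mul_le_mul_of_nonneg_right h1 (by positivity)
          _ = 1 := mul_inv_cancel₀ h3.ne'
      have amgm : ∀ a b : ℝ, a * b ≤ (a ^ 2 * sN⁻¹ + sN * b ^ 2) / 2 := by
        intro a b
        have h2 : 2 * sN * (a * b) ≤ a ^ 2 + (sN * b) ^ 2 := by
          nlinarith [sq_nonneg (a - sN * b)]
        have h3 : (0:ℝ) < 2 * sN := by linarith
        calc a * b = (2 * sN * (a * b)) / (2 * sN) := by field_simp
          _ ≤ (a ^ 2 + (sN * b) ^ 2) / (2 * sN) := (div_le_div_iff_of_pos_right h3).mpr h2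
          _ = (a ^ 2 * sN⁻¹ + sN * b ^ 2) / 2 := by field_simp
      have term : ∀ j k, P2 j k → c j * c k * v k
          ≤ (c j ^ 2 * v j * sN⁻¹ + sN * (c k ^ 2 * v k)) / 2 * r ^ (g j k) := by
        intro j k hp
        have hdpos : m j < m k := hp.1.1
        have hd : m k = m j + (g j k : ℤ) := by
          have h0 : g j k = (m k - m j).toNat := rfl
          omega
        have hvv : v j = v k * 2 ^ (g j k) := by
          rw [hve j, hve k, hd]
          rw [← zpow_natCast (2:ℝ) (g j k), ← zpow_add₀ (by norm_num : (2:ℝ) ≠ 0)]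
          congr 1
          ring
        have hsj : Real.sqrt (v j) = Real.sqrt (v k) * (Real.sqrt 2) ^ (g j k) := by
          rw [hvv, Real.sqrt_mul (hvpos k).le, hpow]
        have hid : c j * c k * v k
            = (c j * Real.sqrt (v j)) * (c k * Real.sqrt (v k)) * r ^ (g j k) := by
          rw [hsj, hr, inv_pow]
          have h2d : ((Real.sqrt 2) ^ (g j k)) * ((Real.sqrt 2) ^ (g j k))⁻¹ = 1 :=
            mul_inv_cancel₀ (by positivity)
          have hq : Real.sqrt (v k) * Real.sqrt (v k) = v k := Real.mul_self_sqrt (hvpos k).le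
          calc c j * c k * v k
              = c j * c k * (Real.sqrt (v k) * Real.sqrt (v k)) *
                  (((Real.sqrt 2) ^ (g j k)) * ((Real.sqrt 2) ^ (g j k))⁻¹) := by
                rw [hq, h2d]; ring
            _ = c j * (Real.sqrt (v k) * (Real.sqrt 2) ^ (g j k)) * (c k * Real.sqrt (v k)) *
                  ((Real.sqrt 2) ^ (g j k))⁻¹ := by ring
        rw [hid]
        have hb := amgm (c j * Real.sqrt (v j)) (c k * Real.sqrt (v k))
        have ha2 : (c j * Real.sqrt (v j)) ^ 2 = c j ^ 2 * v j := by
          rw [mul_pow, Real.sq_sqrt (hvpos j).le]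
        have hb2 : (c k * Real.sqrt (v k)) ^ 2 = c k ^ 2 * v k := by
          rw [mul_pow, Real.sq_sqrt (hvpos k).le]
        rw [ha2, hb2] at hb
        exact mul_le_mul_of_nonneg_right hb (by positivity)
      have U1 : (∑ j, ∑ k, if P2 j k then c j ^ 2 * v j * sN⁻¹ / 2 * r ^ (g j k) else 0)
          ≤ B / 2 := by
        have per : ∀ j : Fin N, (∑ k, if P2 j k then c j ^ 2 * v j * sN⁻¹ / 2 * r ^ (g j k) else 0)
            ≤ c j ^ 2 * v j / 2 := by
          intro j
          have e : (∑ k, if P2 j k then c j ^ 2 * v j * sN⁻¹ / 2 * r ^ (g j k) else 0)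
              = (c j ^ 2 * v j * sN⁻¹ / 2) * (∑ k, if P2 j k then r ^ (g j k) else 0) := by
            rw [Finset.mul_sum]
            apply Finset.sum_congr rfl
            intro k _
            split_ifs with h
            · ring
            · ring
          have inner : (∑ k, if P2 j k then r ^ (g j k) else 0) ≤ (N:ℝ) * (r ^ D * r) := by
            calc (∑ k, if P2 j k then r ^ (g j k) else 0) ≤ ∑ _k : Fin N, r ^ D * r := by
                  apply Finset.sum_le_sum
                  intro k _
                  split_ifs with hp
                  · have hge : D + 1 ≤ g j k := hp.2
                    calc r ^ (g j k) ≤ r ^ (D + 1) :=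
                          pow_le_pow_of_le_one hr0.le hr1.le hge
                      _ = r ^ D * r := by ring
                  · positivity
              _ = (N:ℝ) * (r ^ D * r) := by
                  rw [Finset.sum_const, Finset.card_univ, Fintype.card_fin, nsmul_eq_mul]
          have h1 : sN⁻¹ * (N:ℝ) = sN := by
            rw [← hsNsq]
            field_simp
          have h2 : sN * (r ^ D * r) ≤ 1 := by
            have h4 : (0:ℝ) ≤ sN * r ^ D := by positivity
            calc sN * (r ^ D * r) = (sN * r ^ D) * r := by ring
              _ ≤ 1 * 1 := mul_le_mul hrD hr1.le hr0.le (by linarith)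
              _ = 1 := by ring
          calc (∑ k, if P2 j k then c j ^ 2 * v j * sN⁻¹ / 2 * r ^ (g j k) else 0)
              = (c j ^ 2 * v j * sN⁻¹ / 2) * (∑ k, if P2 j k then r ^ (g j k) else 0) := e
            _ ≤ (c j ^ 2 * v j * sN⁻¹ / 2) * ((N:ℝ) * (r ^ D * r)) :=
                mul_le_mul_of_nonneg_left inner (by positivity)
            _ = (c j ^ 2 * v j / 2) * ((sN⁻¹ * (N:ℝ)) * (r ^ D * r)) := by ring
            _ = (c j ^ 2 * v j / 2) * (sN * (r ^ D * r)) := by rw [h1]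
            _ ≤ (c j ^ 2 * v j / 2) * 1 := mul_le_mul_of_nonneg_left h2 (by positivity)
            _ = c j ^ 2 * v j / 2 := by ring
        calc (∑ j, ∑ k, if P2 j k then c j ^ 2 * v j * sN⁻¹ / 2 * r ^ (g j k) else 0)
            ≤ ∑ j, c j ^ 2 * v j / 2 := Finset.sum_le_sum (fun j _ => per j)
          _ = B / 2 := by rw [hB, Finset.sum_div]
      have U2 : (∑ j, ∑ k, if P2 j k then sN * (c k ^ 2 * v k) / 2 * r ^ (g j k) else 0)
          ≤ 3 * B / 2 := by
        rw [Finset.sum_comm]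
        have per : ∀ k : Fin N, (∑ j, if P2 j k then sN * (c k ^ 2 * v k) / 2 * r ^ (g j k) else 0)
            ≤ 3 * (c k ^ 2 * v k) / 2 := by
          intro k
          have e : (∑ j, if P2 j k then sN * (c k ^ 2 * v k) / 2 * r ^ (g j k) else 0)
              = (sN * (c k ^ 2 * v k) / 2) * (∑ j, if P2 j k then r ^ (g j k) else 0) := by
            rw [Finset.mul_sum]
            apply Finset.sum_congr rfl
            intro j _
            split_ifs with h
            · ring
            · ring
          have inner : (∑ j, if P2 j k then r ^ (g j k) else 0) ≤ 3 * sN⁻¹ := by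
            rw [← Finset.sum_filter]
            have hinj : ∀ j1 ∈ Finset.univ.filter (fun j => P2 j k),
                ∀ j2 ∈ Finset.univ.filter (fun j => P2 j k), g j1 k = g j2 k → j1 = j2 := by
              intro j1 hj1 j2 hj2 he
              simp only [Finset.mem_filter] at hj1 hj2
              have hm12 : m j1 = m j2 := by
                have e1 : (m k - m j1).toNat = (m k - m j2).toNat := he
                have l1 : m j1 < m k := hj1.2.1.1
                have l2 : m j2 < m k := hj2.2.1.1
                omega
              exact hanc k j1 j2 hj1.2.1.2 hj2.2.1.2 hm12
            have himg : ∑ j ∈ Finset.univ.filter (fun j => P2 j k), r ^ (g j k)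
                = ∑ d ∈ (Finset.univ.filter (fun j => P2 j k)).image (fun j => g j k), r ^ d :=
              (Finset.sum_image hinj).symm
            rw [himg]
            have hge : ∀ d ∈ (Finset.univ.filter (fun j => P2 j k)).image (fun j => g j k),
                D + 1 ≤ d := by
              intro d hd
              obtain ⟨j, hj, rfl⟩ := Finset.mem_image.mp hd
              simp only [Finset.mem_filter] at hj
              omega
            have h34 : r ≤ 3 / 4 := by
              have h43 : (4:ℝ) / 3 ≤ Real.sqrt 2 := by
                nlinarith [Real.sq_sqrt (show (0:ℝ) ≤ 2 by norm_num), Real.sqrt_nonneg 2]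
              rw [hr, inv_eq_one_div, div_le_iff₀ (by positivity)]
              linarith
            have hden : (0:ℝ) < 1 - r := by linarith
            have h1 : r ^ D ≤ sN⁻¹ := by
              rw [← one_div, le_div_iff₀ hsN0]
              linarith [hrD, mul_comm sN (r ^ D)]
            calc ∑ d ∈ (Finset.univ.filter (fun j => P2 j k)).image (fun j => g j k), r ^ d
                ≤ r ^ (D + 1) / (1 - r) := geom_tail hr0.le hr1 (D + 1) _ hge
              _ = r ^ D * r / (1 - r) := by ring
              _ ≤ sN⁻¹ * r / (1 - r) :=
                  (div_le_div_iff_of_pos_right hden).mpr (mul_le_mul_of_nonneg_right h1 hr0.le)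
              _ ≤ 3 * sN⁻¹ := by
                  rw [div_le_iff₀ hden]
                  nlinarith [inv_nonneg.mpr hsN0.le, h34]
          calc (∑ j, if P2 j k then sN * (c k ^ 2 * v k) / 2 * r ^ (g j k) else 0)
              = (sN * (c k ^ 2 * v k) / 2) * (∑ j, if P2 j k then r ^ (g j k) else 0) := e
            _ ≤ (sN * (c k ^ 2 * v k) / 2) * (3 * sN⁻¹) :=
                mul_le_mul_of_nonneg_left inner (by positivity)
            _ = 3 * (c k ^ 2 * v k) / 2 * (sN * sN⁻¹) := by ring
            _ = 3 * (c k ^ 2 * v k) / 2 := by rw [mul_inv_cancel₀ hsN0.ne']; ring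
        calc (∑ k, ∑ j, if P2 j k then sN * (c k ^ 2 * v k) / 2 * r ^ (g j k) else 0)
            ≤ ∑ k, 3 * (c k ^ 2 * v k) / 2 := Finset.sum_le_sum (fun k _ => per k)
          _ = 3 * B / 2 := by rw [hB, Finset.mul_sum, Finset.sum_div]
      have split2 : (∑ j, ∑ k, if P2 j k then c j * c k * v k else 0)
          ≤ (∑ j, ∑ k, if P2 j k then c j ^ 2 * v j * sN⁻¹ / 2 * r ^ (g j k) else 0)
            + (∑ j, ∑ k, if P2 j k then sN * (c k ^ 2 * v k) / 2 * r ^ (g j k) else 0) := by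
        rw [← Finset.sum_add_distrib]
        apply Finset.sum_le_sum
        intro j _
        rw [← Finset.sum_add_distrib]
        apply Finset.sum_le_sum
        intro k _
        by_cases hp : P2 j k
        · rw [if_pos hp, if_pos hp, if_pos hp]
          calc c j * c k * v k
              ≤ (c j ^ 2 * v j * sN⁻¹ + sN * (c k ^ 2 * v k)) / 2 * r ^ (g j k) := term j k hp
            _ = c j ^ 2 * v j * sN⁻¹ / 2 * r ^ (g j k)
                + sN * (c k ^ 2 * v k) / 2 * r ^ (g j k) := by ring
        · rw [if_neg hp, if_neg hp, if_neg hp]; simp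
      linarith [U1, U2, split2]
    rw [Tsplit]
    nlinarith [hT1, hT2, hBnn]
  calc ∑ j, ∑ k, c j * c k *
        (volume (dyadicI (ι j).1 (ι j).2 ∩ dyadicI (ι k).1 (ι k).2)).toReal
      = B + 2 * T := decomp
    _ ≤ (5 + 2 * (D:ℝ)) * B := by nlinarith [hBnn, main]

/-- There is an absolute constant `C > 0` such that for any `N ≥ 2` pairwise distinct
dyadic intervals and positive coefficients `c_j`,
`‖∑ c_j 𝟙_{Δ_j}‖₂ ≤ C √(log N) (∑ c_j² |Δ_j|)^{1/2}`. -/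
theorem stmt_2 : ∃ C > (0 : ℝ), ∀ (N : ℕ), 2 ≤ N →
    ∀ ι : Fin N → ℤ × ℤ, Function.Injective ι →
    ∀ c : Fin N → ℝ, (∀ j, 0 < c j) →
    (eLpNorm (fun x => ∑ j, c j * (dyadicI (ι j).1 (ι j).2).indicator
        (fun _ => (1 : ℝ)) x) 2 volume).toReal ≤
      C * Real.sqrt (Real.log N) *
        Real.sqrt (∑ j, (c j) ^ 2 * (volume (dyadicI (ι j).1 (ι j).2)).toReal) := by
  refine ⟨10, by norm_num, ?_⟩
  intro N hN ι hι c hc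
  have hN2R : (2:ℝ) ≤ (N:ℝ) := by exact_mod_cast hN
  have hlogN : Real.log 2 ≤ Real.log N := Real.log_le_log (by norm_num) hN2R
  have hlog2 : (0.6931:ℝ) ≤ Real.log 2 := by
    have := Real.log_two_gt_d9
    linarith
  have hlogNnn : (0:ℝ) ≤ Real.log N := by linarith
  set B : ℝ := ∑ j, (c j) ^ 2 * (volume (dyadicI (ι j).1 (ι j).2)).toReal with hB
  have hBnn : 0 ≤ B := by
    apply Finset.sum_nonneg
    intro j _
    positivity
  have hQB := key_bound N hN ι hι c hc
  have hD1 : (Nat.clog 2 N : ℝ) ≤ Real.log N / Real.log 2 + 1 := by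
    by_cases hD0 : Nat.clog 2 N = 0
    · rw [hD0]
      have : 0 ≤ Real.log N / Real.log 2 := by positivity
      push_cast
      linarith
    · have h1 : 2 ^ (Nat.clog 2 N - 1) < N :=
        Nat.pow_pred_clog_lt_self (by norm_num) (by omega)
      have h2 : ((2:ℝ)) ^ (Nat.clog 2 N - 1) ≤ (N:ℝ) := by
        exact_mod_cast h1.le
      have h3 : ((Nat.clog 2 N - 1 : ℕ) : ℝ) * Real.log 2 ≤ Real.log N := by
        rw [← Real.log_pow]
        exact Real.log_le_log (by positivity) h2
      have h4 : ((Nat.clog 2 N - 1 : ℕ) : ℝ) = (Nat.clog 2 N : ℝ) - 1 := by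
        have : 1 ≤ Nat.clog 2 N := by omega
        push_cast [this]
        ring
      rw [h4] at h3
      have hlog2pos : (0:ℝ) < Real.log 2 := by linarith
      have h5 : (Nat.clog 2 N : ℝ) - 1 ≤ Real.log N / Real.log 2 :=
        (le_div_iff₀ hlog2pos).mpr h3
      linarith
  have hfac : (5 + 2 * (Nat.clog 2 N : ℝ)) ≤ 100 * Real.log N := by
    have h1 : Real.log N / Real.log 2 ≤ Real.log N / 0.6931 :=
      div_le_div_of_nonneg_left hlogNnn (by norm_num) hlog2
    have h2 : Real.log N / 0.6931 = Real.log N * (1/0.6931) := by ring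
    nlinarith [hlogN, hlog2, hD1, h1]
  rw [eLpNorm_sum_ind N ι c]
  have hsqrt100 : Real.sqrt (100 * Real.log N * B)
      = 10 * Real.sqrt (Real.log N) * Real.sqrt B := by
    rw [Real.sqrt_mul (by positivity) B, Real.sqrt_mul (by norm_num : (0:ℝ) ≤ 100) (Real.log N),
      show Real.sqrt 100 = 10 by
        rw [show (100:ℝ) = 10 ^ 2 by norm_num, Real.sqrt_sq (by norm_num)]]
  calc Real.sqrt (∑ j, ∑ k, c j * c k *
        (volume (dyadicI (ι j).1 (ι j).2 ∩ dyadicI (ι k).1 (ι k).2)).toReal)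
      ≤ Real.sqrt (100 * Real.log N * B) := by
        apply Real.sqrt_le_sqrt
        calc ∑ j, ∑ k, c j * c k *
              (volume (dyadicI (ι j).1 (ι j).2 ∩ dyadicI (ι k).1 (ι k).2)).toReal
            ≤ (5 + 2 * (Nat.clog 2 N : ℝ)) * B := hQB
          _ ≤ 100 * Real.log N * B := mul_le_mul_of_nonneg_right hfac hBnn
    _ = 10 * Real.sqrt (Real.log N) * Real.sqrt B := hsqrt100
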